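/- If a sequence of strictly positive probability vectors p^(k) ∈ P_n converges (in the Euclidean sense) to a probability vector q having at least one zero entry, then ‖p^(k)‖ → ∞ in the norm induced by the logarithmic inner product, and consequently (p^(k)) is not Cauchy with respect to that norm. -/

import Mathlib

open Real BigOperators Finset Filter

def IsPosProb {n : ℕ} (p : Fin n → ℝ) : Prop :=
  (∀ i, 0 < p i) ∧ ∑ i, p i = 1

noncomputable def oplus {n : ℕ} (p q : Fin n → ℝ) : Fin n → ℝ :=
  fun i => p i * q i / ∑ j, p j * q j

noncomputable def odot {n : ℕ} (α : ℝ) (p : Fin n → ℝ) : Fin n → ℝ :=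
  fun i => p i ^ α / ∑ j, p j ^ α

noncomputable def unif (n : ℕ) : Fin n → ℝ := fun _ => 1 / n

noncomputable def logIP {n : ℕ} (p q : Fin n → ℝ) : ℝ :=
  ∑ i : Fin (n - 1),
    Real.log (p ⟨i.val, by have := i.isLt; omega⟩ / p ⟨i.val + 1, by have := i.isLt; omega⟩) *
    Real.log (q ⟨i.val, by have := i.isLt; omega⟩ / q ⟨i.val + 1, by have := i.isLt; omega⟩)

noncomputable def logNorm {n : ℕ} (p : Fin n → ℝ) : ℝ := Real.sqrt (logIP p p)

noncomputable def psub {n : ℕ} (p q : Fin n → ℝ) : Fin n → ℝ := oplus p (odot (-1) q)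

section Aux

variable {n : ℕ}

noncomputable def logVec (p : Fin n → ℝ) : EuclideanSpace ℝ (Fin (n - 1)) :=
  WithLp.toLp 2 fun i => Real.log (p ⟨i.val, by have := i.isLt; omega⟩ / p ⟨i.val + 1, by have := i.isLt; omega⟩)

lemma logNorm_eq_norm (p : Fin n → ℝ) : logNorm p = ‖logVec p‖ := by
  rw [EuclideanSpace.norm_eq, logNorm, logIP]
  congr 1
  refine Finset.sum_congr rfl fun i _ => ?_
  rw [Real.norm_eq_abs, sq_abs, sq]
  rfl

lemma psub_ratio (p q : Fin n → ℝ) (hp : ∀ i, 0 < p i) (hq : ∀ i, 0 < q i) (a b : Fin n) :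
    Real.log (psub p q a / psub p q b) = Real.log (p a / p b) - Real.log (q a / q b) := by
  have hne : Nonempty (Fin n) := ⟨a⟩
  have hT : (0 : ℝ) < ∑ j, (q j)⁻¹ :=
    Finset.sum_pos (fun j _ => inv_pos.mpr (hq j)) Finset.univ_nonempty
  have hS : (0 : ℝ) < ∑ j, p j * odot (-1) q j := by
    refine Finset.sum_pos (fun j _ => mul_pos (hp j) ?_) Finset.univ_nonempty
    unfold odot
    simp only [Real.rpow_neg_one]
    exact div_pos (inv_pos.mpr (hq j)) hT
  have h1 : psub p q a / psub p q b = (p a / p b) / (q a / q b) := by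
    show (p a * odot (-1) q a / ∑ j, p j * odot (-1) q j) /
        (p b * odot (-1) q b / ∑ j, p j * odot (-1) q j) = _
    rw [div_div_div_cancel_right₀ (ne_of_gt hS)]
    unfold odot
    simp only [Real.rpow_neg_one]
    rw [mul_div_assoc', mul_div_assoc', div_div_div_cancel_right₀ (ne_of_gt hT), div_div_div_eq]
    have h2 : p b ≠ 0 := (hp b).ne'
    have h3 : q a ≠ 0 := (hq a).ne'
    have h4 : q b ≠ 0 := (hq b).ne'
    field_simp
  rw [h1, Real.log_div (div_pos (hp a) (hp b)).ne' (div_pos (hq a) (hq b)).ne']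

lemma logVec_psub (p q : Fin n → ℝ) (hp : ∀ i, 0 < p i) (hq : ∀ i, 0 < q i) :
    logVec (psub p q) = logVec p - logVec q := by
  refine PiLp.ext fun i => ?_
  show Real.log _ = logVec p i - logVec q i
  exact psub_ratio p q hp hq _ _

lemma exists_adjacent (q : Fin n → ℝ) (i₀ b : Fin n) (h0 : q i₀ = 0) (hb : q b ≠ 0) :
    ∃ j : Fin (n - 1), ¬ (q ⟨j.val, by have := j.isLt; omega⟩ = 0 ↔
      q ⟨j.val + 1, by have := j.isLt; omega⟩ = 0) := by
  by_contra hcon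
  push_neg at hcon
  have hn : 0 < n := i₀.pos
  have key : ∀ m (hm : m < n), (q ⟨m, hm⟩ = 0 ↔ q ⟨0, hn⟩ = 0) := by
    intro m
    induction m with
    | zero => intro hm; rfl
    | succ k ih =>
      intro hm
      have hk : k < n - 1 := by omega
      have := hcon ⟨k, hk⟩
      simp only at this
      exact this.symm.trans (ih (by omega))
  have h1 := key i₀.val i₀.isLt
  have h2 := key b.val b.isLt
  rw [Fin.eta] at h1 h2
  rw [h1] at h0
  exact hb (h2.mpr h0)

end Aux

theorem stmt19 {n : ℕ} (p : ℕ → Fin n → ℝ) (hp : ∀ k, IsPosProb (p k))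
    (q : Fin n → ℝ) (hq0 : ∀ i, 0 ≤ q i) (hq1 : ∑ i, q i = 1)
    (i₀ : Fin n) (hzero : q i₀ = 0)
    (hconv : ∀ i, Filter.Tendsto (fun k => p k i) Filter.atTop (nhds (q i))) :
    Filter.Tendsto (fun k => logNorm (p k)) Filter.atTop Filter.atTop ∧
    ¬ (∀ ε > 0, ∃ N : ℕ, ∀ m ≥ N, ∀ l ≥ N, logNorm (psub (p m) (p l)) < ε) := by
  -- find an index with nonzero q
  obtain ⟨b, -, hb⟩ := Finset.exists_ne_zero_of_sum_ne_zero (by rw [hq1]; norm_num :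
      ∑ i, q i ≠ 0)
  obtain ⟨j, hj⟩ := exists_adjacent q i₀ b hzero hb
  set jl : Fin n := ⟨j.val, by have := j.isLt; omega⟩ with hjl
  set jr : Fin n := ⟨j.val + 1, by have := j.isLt; omega⟩ with hjr
  -- the absolute log-ratio tends to infinity
  have habs : Filter.Tendsto (fun k => |Real.log (p k jl / p k jr)|) Filter.atTop Filter.atTop := by
    by_cases hzl : q jl = 0
    · -- then q jr ≠ 0
      have hzr : q jr ≠ 0 := fun h => hj ⟨fun _ => h, fun _ => hzl⟩
      have hqr : 0 < q jr := lt_of_le_of_ne (hq0 jr) (Ne.symm hzr)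
      have hratio : Filter.Tendsto (fun k => p k jl / p k jr) Filter.atTop (nhds 0) := by
        have := (hconv jl).div (hconv jr) hzr
        rwa [hzl, zero_div] at this
      have hratio' : Filter.Tendsto (fun k => p k jl / p k jr) Filter.atTop
          (nhdsWithin 0 (Set.Ioi 0)) := by
        refine tendsto_nhdsWithin_of_tendsto_nhds_of_eventually_within _ hratio ?_
        filter_upwards with k
        exact div_pos ((hp k).1 jl) ((hp k).1 jr)
      have hlog : Filter.Tendsto (fun k => Real.log (p k jl / p k jr)) Filter.atTop Filter.atBot :=
        Real.tendsto_log_nhdsGT_zero.comp hratio'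
      exact tendsto_abs_atBot_atTop.comp hlog
    · -- then q jr = 0, q jl > 0
      have hzr : q jr = 0 := by
        by_contra hzr
        exact hj ⟨fun h => absurd h hzl, fun h => absurd h hzr⟩
      have hql : 0 < q jl := lt_of_le_of_ne (hq0 jl) (Ne.symm hzl)
      have hinv : Filter.Tendsto (fun k => (p k jr)⁻¹) Filter.atTop Filter.atTop := by
        refine Filter.Tendsto.inv_tendsto_nhdsGT_zero ?_
        refine tendsto_nhdsWithin_of_tendsto_nhds_of_eventually_within _ ?_ ?_
        · have := hconv jr; rwa [hzr] at this
        · filter_upwards with k; exact (hp k).1 jr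
      have hratio : Filter.Tendsto (fun k => p k jl / p k jr) Filter.atTop Filter.atTop := by
        simp only [div_eq_mul_inv]
        exact Filter.Tendsto.pos_mul_atTop hql (hconv jl) hinv
      have hlog : Filter.Tendsto (fun k => Real.log (p k jl / p k jr)) Filter.atTop Filter.atTop :=
        Real.tendsto_log_atTop.comp hratio
      exact tendsto_abs_atTop_atTop.comp hlog
  -- logNorm dominates the absolute log-ratio
  have hle : ∀ k, |Real.log (p k jl / p k jr)| ≤ logNorm (p k) := by
    intro k
    have h1 : Real.log (p k jl / p k jr) * Real.log (p k jl / p k jr) ≤ logIP (p k) (p k) := by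
      unfold logIP
      exact Finset.single_le_sum (f := fun i : Fin (n-1) =>
        Real.log (p k ⟨i.val, by have := i.isLt; omega⟩ / p k ⟨i.val + 1, by have := i.isLt; omega⟩) *
        Real.log (p k ⟨i.val, by have := i.isLt; omega⟩ / p k ⟨i.val + 1, by have := i.isLt; omega⟩))
        (fun i _ => mul_self_nonneg _) (Finset.mem_univ j)
    calc |Real.log (p k jl / p k jr)|
        = Real.sqrt (Real.log (p k jl / p k jr) * Real.log (p k jl / p k jr)) :=
          (Real.sqrt_mul_self_eq_abs _).symm
      _ ≤ logNorm (p k) := Real.sqrt_le_sqrt h1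
  have htend : Filter.Tendsto (fun k => logNorm (p k)) Filter.atTop Filter.atTop :=
    tendsto_atTop_mono hle habs
  refine ⟨htend, ?_⟩
  intro hC
  obtain ⟨N, hN⟩ := hC 1 one_pos
  obtain ⟨m, hm1, hm2⟩ := ((htend.eventually_ge_atTop (1 + logNorm (p N))).and
    (eventually_ge_atTop N)).exists
  have hlt := hN m hm2 N le_rfl
  have htri : logNorm (p m) ≤ logNorm (psub (p m) (p N)) + logNorm (p N) := by
    rw [logNorm_eq_norm, logNorm_eq_norm, logNorm_eq_norm,
      logVec_psub (p m) (p N) (hp m).1 (hp N).1]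
    calc ‖logVec (p m)‖ = ‖(logVec (p m) - logVec (p N)) + logVec (p N)‖ := by
          rw [sub_add_cancel]
      _ ≤ ‖logVec (p m) - logVec (p N)‖ + ‖logVec (p N)‖ := norm_add_le _ _
  linarith
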